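/- Let Φ be a reduced root system with base Π, J ⊆ Π, π: ZΦ → ZΦ/⟨Π∖J⟩, and let Φ_J = π(Φ)∖{0} be the set of relative roots. For any α ∈ Φ_J there is an integer m_α ≥ 1 such that Zα ∩ Φ_J = {±α, ±2α, …, ±m_α α}; that is, the set of integer multiples of α that are relative roots forms a symmetric interval of multiples without gaps. -/

import Mathlib

open scoped RealInnerProductSpace

/-- A reduced root system `Φ` with a fixed base (system of simple roots) `base`
in a real inner product space. -/
structure RootSystemData (V : Type) [NormedAddCommGroup V] [InnerProductSpace ℝ V] where
  Φ : Set V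
  base : Finset V
  finite : Φ.Finite
  zero_notMem : (0:V) ∉ Φ
  neg_mem : ∀ a ∈ Φ, -a ∈ Φ
  reduced : ∀ a ∈ Φ, ∀ t : ℝ, t • a ∈ Φ → t = 1 ∨ t = -1
  reflect_mem : ∀ a ∈ Φ, ∀ b ∈ Φ, b - (2 * (inner ℝ a b : ℝ) / (inner ℝ a a : ℝ)) • a ∈ Φ
  cartan_int : ∀ a ∈ Φ, ∀ b ∈ Φ, ∃ n : ℤ, 2 * (inner ℝ a b : ℝ) / (inner ℝ a a : ℝ) = (n : ℝ)
  base_sub : ↑base ⊆ Φ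
  base_indep : LinearIndependent ℝ (fun b : base => (b : V))
  base_gen : ∀ a ∈ Φ,
    (∃ c : V → ℕ, a = ∑ b ∈ base, c b • b) ∨ (∃ c : V → ℕ, -a = ∑ b ∈ base, c b • b)

namespace RootSystemData

variable {V : Type} [NormedAddCommGroup V] [InnerProductSpace ℝ V] (RS : RootSystemData V)

/-- `a` is a nonnegative integral combination of the simple roots. -/
def IsPos (a : V) : Prop := ∃ c : V → ℕ, a = ∑ b ∈ RS.base, c b • b

/-- The quotient space `V / ⟨Π ∖ J⟩`, ambient space of the relative roots. -/
abbrev Qspace (J : Finset V) : Type :=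
  V ⧸ Submodule.span ℝ ((RS.base : Set V) \ (J : Set V))

/-- The canonical projection `π : V → V / ⟨Π ∖ J⟩`. -/
def proj (J : Finset V) : V →ₗ[ℝ] RS.Qspace J :=
  Submodule.mkQ _

/-- The set of relative roots `Φ_J = π(Φ) ∖ {0}`. -/
def relRoots (J : Finset V) : Set (RS.Qspace J) := (RS.proj J '' RS.Φ) \ {0}

/-- `β` is a simple relative root: a nonzero image of a simple root in `J`. -/
def IsSimpleRel (J : Finset V) (β : RS.Qspace J) : Prop :=
  β ≠ 0 ∧ ∃ b ∈ J, β = RS.proj J b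

/-- `β` is a positive relative root: a relative root that is a nonnegative
integral combination of the simple relative roots. -/
def IsPosRel (J : Finset V) (β : RS.Qspace J) : Prop :=
  β ∈ RS.relRoots J ∧ ∃ c : V → ℕ, β = ∑ b ∈ J, c b • RS.proj J b

/-- `a` is maximal in `S` with respect to the base `Π`. -/
def IsMaximalIn (S : Set V) (a : V) : Prop := a ∈ S ∧ ∀ b ∈ RS.base, a + b ∉ S

/-- `a` is minimal in `S` with respect to the base `Π`. -/
def IsMinimalIn (S : Set V) (a : V) : Prop := a ∈ S ∧ ∀ b ∈ RS.base, a - b ∉ S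

/-- `a` is the highest root: every root is obtained from it by subtracting a
nonnegative combination of simple roots. -/
def IsHighest (a : V) : Prop :=
  a ∈ RS.Φ ∧ ∀ b ∈ RS.Φ, ∃ c : V → ℕ, a - b = ∑ x ∈ RS.base, c x • x

/-- `S` is an irreducible component of `Φ`: a nonempty subset orthogonal to its
complement admitting no further nontrivial orthogonal splitting. -/
def IsComponent (S : Set V) : Prop :=
  S ⊆ RS.Φ ∧ S.Nonempty ∧ (∀ a ∈ S, ∀ b ∈ RS.Φ \ S, (inner ℝ a b : ℝ) = 0) ∧
    ∀ T ⊆ S, T.Nonempty → (∀ a ∈ T, ∀ b ∈ RS.Φ \ T, (inner ℝ a b : ℝ) = 0) → T = S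

/-- The root system is irreducible. -/
def Irred : Prop := RS.IsComponent RS.Φ

end RootSystemData

section AuxLemmas

variable {V : Type} [NormedAddCommGroup V] [InnerProductSpace ℝ V]

lemma RootSystemData.ne_zero_of_mem (RS : RootSystemData V) {a : V} (ha : a ∈ RS.Φ) : a ≠ 0 :=
  fun h => RS.zero_notMem (h ▸ ha)

lemma aux_inner_self_pos {x : V} (hx : x ≠ 0) : 0 < (inner ℝ x x : ℝ) := by
  rw [real_inner_self_eq_norm_mul_norm]
  exact mul_pos (norm_pos_iff.mpr hx) (norm_pos_iff.mpr hx)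

/-- If two distinct roots have positive inner product, their difference is a root. -/
lemma RootSystemData.sub_mem_of_inner_pos (RS : RootSystemData V) {a b : V}
    (ha : a ∈ RS.Φ) (hb : b ∈ RS.Φ) (hne : a ≠ b) (hpos : 0 < (inner ℝ a b : ℝ)) :
    b - a ∈ RS.Φ := by
  have haa : 0 < (inner ℝ a a : ℝ) := aux_inner_self_pos (RS.ne_zero_of_mem ha)
  have hbb : 0 < (inner ℝ b b : ℝ) := aux_inner_self_pos (RS.ne_zero_of_mem hb)
  obtain ⟨n₁, hn₁⟩ := RS.cartan_int a ha b hb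
  obtain ⟨n₂, hn₂⟩ := RS.cartan_int b hb a ha
  have hba : (inner ℝ b a : ℝ) = inner ℝ a b := real_inner_comm a b
  have hn₁pos : 0 < n₁ := by
    have h : (0:ℝ) < (n₁:ℝ) := by rw [← hn₁]; positivity
    exact_mod_cast h
  have hn₂pos : 0 < n₂ := by
    have h : (0:ℝ) < (n₂:ℝ) := by rw [← hn₂, hba]; positivity
    exact_mod_cast h
  by_cases h1 : n₁ = 1
  · have h := RS.reflect_mem a ha b hb
    rwa [hn₁, h1, Int.cast_one, one_smul] at h
  by_cases h2 : n₂ = 1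
  · have h := RS.reflect_mem b hb a ha
    rw [hn₂, h2, Int.cast_one, one_smul] at h
    have h' := RS.neg_mem _ h
    rwa [neg_sub] at h'
  exfalso
  have hn₁2 : (2:ℝ) ≤ (n₁:ℝ) := by exact_mod_cast (by omega : (2:ℤ) ≤ n₁)
  have hn₂2 : (2:ℝ) ≤ (n₂:ℝ) := by exact_mod_cast (by omega : (2:ℤ) ≤ n₂)
  rw [← hn₁, le_div_iff₀ haa] at hn₁2
  rw [← hn₂, hba, le_div_iff₀ hbb] at hn₂2
  have hab0 : (inner ℝ (a - b) (a - b) : ℝ) ≤ 0 := by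
    rw [real_inner_sub_sub_self]; linarith
  have : a - b = 0 := real_inner_self_nonpos.mp hab0
  exact hne (sub_eq_zero.mp this)

/-- Relative roots are symmetric under negation. -/
lemma RootSystemData.neg_mem_relRoots (RS : RootSystemData V) (J : Finset V)
    {β : RS.Qspace J} (hβ : β ∈ RS.relRoots J) : -β ∈ RS.relRoots J := by
  obtain ⟨⟨b, hbΦ, hb⟩, hβ0⟩ := hβ
  refine ⟨⟨-b, RS.neg_mem b hbΦ, by rw [map_neg, hb]⟩, ?_⟩
  simp only [Set.mem_singleton_iff] at hβ0 ⊢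
  exact neg_ne_zero.mpr hβ0

/-- Descent: if `k•α` is a relative root with `k ≥ 2`, so is `(k-1)•α`. -/
lemma RootSystemData.relRoots_pred (RS : RootSystemData V) (J : Finset V)
    {α : RS.Qspace J} (hα : α ∈ RS.relRoots J) {k : ℕ} (hk : 2 ≤ k)
    (hkα : (k : ℤ) • α ∈ RS.relRoots J) : ((k : ℤ) - 1) • α ∈ RS.relRoots J := by
  classical
  set U : Submodule ℝ V := Submodule.span ℝ ((RS.base : Set V) \ (J : Set V)) with hU
  haveI : FiniteDimensional ℝ U :=
    FiniteDimensional.span_of_finite ℝ (RS.base.finite_toSet.diff)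
  obtain ⟨⟨a₀, ha₀Φ, ha₀⟩, hα0'⟩ := hα
  obtain ⟨⟨b, hbΦ, hb⟩, hk0'⟩ := hkα
  have hα0 : α ≠ 0 := fun h => hα0' (by simp [h])
  -- `Q x` is the component of `x` orthogonal to `U`.
  set Q : V → V := fun x => x - (U.orthogonalProjectionOnto x : V) with hQ
  have hQmem : ∀ x : V, Q x ∈ Uᗮ := fun x => Submodule.sub_starProjection_mem_orthogonal x
  have hmkq : ∀ x : V, RS.proj J x = Submodule.Quotient.mk x := fun x => rfl
  have hQzero : ∀ x : V, RS.proj J x = 0 → Q x = 0 := by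
    intro x hx
    have hxU : x ∈ U := by
      rw [hmkq, Submodule.Quotient.mk_eq_zero] at hx
      exact hx
    simp only [hQ]
    rw [show (U.orthogonalProjectionOnto x : V) = x from Submodule.starProjection_eq_self_iff.mpr hxU, sub_self]
  have hQeq : ∀ x y : V, RS.proj J x = RS.proj J y → Q x = Q y := by
    intro x y hxy
    have hxyU : x - y ∈ U := by
      rw [hmkq, hmkq] at hxy
      exact (Submodule.Quotient.eq U).mp hxy
    have h1 : ((U.orthogonalProjectionOnto (x - y)) : V) = x - y :=
      Submodule.starProjection_eq_self_iff.mpr hxyU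
    have h2 : ((U.orthogonalProjectionOnto x) : V) - U.orthogonalProjectionOnto y = x - y := by
      rw [← h1, map_sub]; rfl
    simp only [hQ]
    rw [sub_eq_sub_iff_sub_eq_sub, h2]
  -- the fiber of `α` inside `Φ`
  set Sfin : Finset V := RS.finite.toFinset.filter (fun a => RS.proj J a = α) with hSfin
  have hmemS : ∀ a, a ∈ Sfin ↔ a ∈ RS.Φ ∧ RS.proj J a = α := by
    intro a
    simp only [hSfin, Finset.mem_filter, Set.Finite.mem_toFinset]
  have ha₀S : a₀ ∈ Sfin := (hmemS a₀).mpr ⟨ha₀Φ, ha₀⟩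
  set v : V := ∑ a ∈ Sfin, a with hv
  -- `v` is orthogonal to every simple root outside `J`
  have horth : ∀ c ∈ (RS.base : Set V) \ (J : Set V), (inner ℝ c v : ℝ) = 0 := by
    intro c hc
    have hcΦ : c ∈ RS.Φ := RS.base_sub hc.1
    have hcc : 0 < (inner ℝ c c : ℝ) := aux_inner_self_pos (RS.ne_zero_of_mem hcΦ)
    have hprojc : RS.proj J c = 0 := by
      rw [hmkq, Submodule.Quotient.mk_eq_zero]
      exact Submodule.subset_span hc
    set t : V → ℝ := fun x => 2 * (inner ℝ c x : ℝ) / (inner ℝ c c : ℝ) with ht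
    set f : V → V := fun x => x - t x • c with hf
    have hft : ∀ x, t (f x) = - t x := by
      intro x
      simp only [ht, hf, inner_sub_right, real_inner_smul_right]
      field_simp
      ring
    have hinv : ∀ x, f (f x) = x := by
      intro x
      have : f (f x) = f x - t (f x) • c := rfl
      rw [this, hft, neg_smul, sub_neg_eq_add]
      simp [hf]
    have hfS : ∀ a ∈ Sfin, f a ∈ Sfin := by
      intro a haS
      obtain ⟨haΦ, haα⟩ := (hmemS a).mp haS
      refine (hmemS (f a)).mpr ⟨RS.reflect_mem c hcΦ a haΦ, ?_⟩
      show RS.proj J (a - t a • c) = α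
      rw [map_sub, map_smul, hprojc, smul_zero, sub_zero, haα]
    have hsum : ∑ a ∈ Sfin, f a = v := by
      refine Finset.sum_nbij' f f ?_ ?_ ?_ ?_ ?_
      · exact hfS
      · exact hfS
      · intro a _; exact hinv a
      · intro a _; exact hinv a
      · intro a _; rfl
    have hsum2 : ∑ a ∈ Sfin, f a = v - (2 * (inner ℝ c v : ℝ) / (inner ℝ c c : ℝ)) • c := by
      simp only [hf, ht]
      rw [Finset.sum_sub_distrib, ← Finset.sum_smul, hv]
      congr 1
      rw [inner_sum, Finset.mul_sum, Finset.sum_div]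
    rw [hsum] at hsum2
    have h0 : (2 * (inner ℝ c v : ℝ) / (inner ℝ c c : ℝ)) • c = 0 :=
      sub_eq_self.mp hsum2.symm
    rcases smul_eq_zero.mp h0 with h | h
    · rcases div_eq_zero_iff.mp h with h' | h'
      · linarith
      · linarith
    · exact absurd h (RS.ne_zero_of_mem hcΦ)
  -- `v ∈ Uᗮ`
  have hvU : v ∈ Uᗮ := by
    rw [Submodule.mem_orthogonal]
    intro u hu
    induction hu using Submodule.span_induction with
    | mem x hx => exact horth x hx
    | zero => exact inner_zero_left v
    | add x y hx hy ihx ihy => rw [inner_add_left, ihx, ihy, add_zero]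
    | smul r x hx ihx => rw [real_inner_smul_left, ihx, mul_zero]
  set e : V := Q a₀ with he
  have he0 : e ≠ 0 := by
    intro h
    apply hα0
    rw [← ha₀, hmkq, Submodule.Quotient.mk_eq_zero]
    have : a₀ = (U.orthogonalProjectionOnto a₀ : V) := by
      have := sub_eq_zero.mp h
      exact this
    rw [this]; exact SetLike.coe_mem _
  have hee : 0 < (inner ℝ e e : ℝ) := aux_inner_self_pos he0
  -- compute Q on the fiber and on b
  have hQa : ∀ a ∈ Sfin, Q a = e := by
    intro a haS
    exact hQeq a a₀ (((hmemS a).mp haS).2.trans ha₀.symm)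
  have hQb : Q b = (k : ℝ) • e := by
    have h1 : RS.proj J b = RS.proj J ((k:ℝ) • a₀) := by
      rw [map_smul, ha₀, hb]
      rw [← Int.cast_natCast (R := ℝ), Int.cast_smul_eq_zsmul]
    have h2 := hQeq b ((k:ℝ) • a₀) h1
    rw [h2]
    show (k:ℝ) • a₀ - (U.orthogonalProjectionOnto ((k:ℝ) • a₀) : V) = (k:ℝ) • e
    rw [map_smul]
    simp only [he, hQ, Submodule.coe_smul, smul_sub]
  -- `v` equals `card • e`
  have hQv : Q v = (Sfin.card : ℝ) • e := by
    have h1 : v - (U.orthogonalProjectionOnto v : V) = ∑ a ∈ Sfin, Q a := by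
      simp only [hQ]
      rw [Finset.sum_sub_distrib, hv]
      congr 1
      rw [map_sum]
      push_cast
      rfl
    have h2 : (∑ a ∈ Sfin, Q a) = (Sfin.card : ℝ) • e := by
      rw [Finset.sum_congr rfl hQa, Finset.sum_const, ← Nat.cast_smul_eq_nsmul ℝ]
    exact h1.trans h2
  have hQvv : Q v = v := by
    simp only [hQ]
    rw [Submodule.orthogonalProjectionOnto_apply_of_mem_orthogonal hvU]
    simp
  have hveq : v = (Sfin.card : ℝ) • e := hQvv ▸ hQv
  -- positivity of ⟪v, b⟫
  have hvb : 0 < (inner ℝ v b : ℝ) := by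
    have hsplit : b = Q b + (U.orthogonalProjectionOnto b : V) := by simp [hQ]
    have hzero : (inner ℝ v ((U.orthogonalProjectionOnto b : V)) : ℝ) = 0 := by
      rw [real_inner_comm]
      exact (Submodule.mem_orthogonal U v).mp hvU _ (SetLike.coe_mem _)
    calc (0:ℝ) < (Sfin.card : ℝ) * ((k:ℝ) * (inner ℝ e e : ℝ)) := by
          have hcard : 0 < (Sfin.card : ℝ) := by
            have : 0 < Sfin.card := Finset.card_pos.mpr ⟨a₀, ha₀S⟩
            exact_mod_cast this
          have hkpos : 0 < (k:ℝ) := by positivity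
          exact mul_pos hcard (mul_pos hkpos hee)
      _ = (inner ℝ v (Q b) : ℝ) := by
          rw [hveq, hQb, real_inner_smul_left, real_inner_smul_right]
      _ = (inner ℝ v b : ℝ) := by
          conv_rhs => rw [hsplit]
          rw [inner_add_right, hzero, add_zero]
  -- find a fiber element with positive inner product against b
  have hex : ∃ a ∈ Sfin, 0 < (inner ℝ a b : ℝ) := by
    by_contra hcon
    push_neg at hcon
    have : (inner ℝ v b : ℝ) ≤ 0 := by
      rw [hv, sum_inner]
      exact Finset.sum_nonpos hcon
    linarith
  obtain ⟨a, haS, hab⟩ := hex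
  obtain ⟨haΦ, haα⟩ := (hmemS a).mp haS
  have hane : a ≠ b := by
    intro h
    have h1 : e = (k:ℝ) • e := (hQa a haS).symm.trans (by rw [h]; exact hQb)
    have h2 : ((k:ℝ) - 1) • e = 0 := by
      rw [sub_smul, one_smul, ← h1, sub_self]
    rcases smul_eq_zero.mp h2 with h3 | h3
    · have : (k:ℝ) = 1 := by linarith [sub_eq_zero.mp h3]
      have : k = 1 := by exact_mod_cast this
      omega
    · exact he0 h3
  have hdiff : b - a ∈ RS.Φ := RS.sub_mem_of_inner_pos haΦ hbΦ hane hab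
  refine ⟨⟨b - a, hdiff, ?_⟩, ?_⟩
  · rw [map_sub, hb, haα, sub_smul, one_smul]
  · simp only [Set.mem_singleton_iff]
    intro hzero
    apply hα0
    have hk1 : ((k:ℤ) - 1 : ℤ) ≠ 0 := by omega
    have : (((k:ℤ) - 1 : ℤ) : ℝ) • α = 0 := by
      rw [Int.cast_smul_eq_zsmul]; exact hzero
    rcases smul_eq_zero.mp this with h | h
    · exact absurd (by exact_mod_cast h : ((k:ℤ) - 1 : ℤ) = 0) hk1
    · exact h

end AuxLemmas


open RootSystemData in
theorem stmt2 {V : Type} [NormedAddCommGroup V] [InnerProductSpace ℝ V]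
    (RS : RootSystemData V) (J : Finset V) (hJ : J ⊆ RS.base)
    (α : RS.Qspace J) (hα : α ∈ RS.relRoots J) :
    ∃ m : ℕ, 1 ≤ m ∧ ∀ k : ℤ, (k • α ∈ RS.relRoots J ↔ k ≠ 0 ∧ k.natAbs ≤ m) := by
  classical
  have hα0 : α ≠ 0 := fun h => hα.2 (by simp [h])
  have hfin : (RS.relRoots J).Finite := (RS.finite.image _).diff
  set T : Set ℕ := {n : ℕ | 0 < n ∧ (n:ℤ) • α ∈ RS.relRoots J} with hT
  have h1T : 1 ∈ T := ⟨one_pos, by rwa [Nat.cast_one, one_smul]⟩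
  have hginj : Function.Injective (fun n : ℕ => ((n:ℤ)) • α) := by
    intro n m hnm
    simp only at hnm
    have h1 : ((n:ℝ)) • α = ((m:ℝ)) • α := by
      rw [show ((n:ℝ)) = (((n:ℤ):ℝ)) by push_cast; ring, Int.cast_smul_eq_zsmul,
          show ((m:ℝ)) = (((m:ℤ):ℝ)) by push_cast; ring, Int.cast_smul_eq_zsmul]
      exact hnm
    have h2 : ((n:ℝ) - (m:ℝ)) • α = 0 := by rw [sub_smul, h1, sub_self]
    rcases smul_eq_zero.mp h2 with h | h
    · have h3 : (n:ℝ) = (m:ℝ) := by linarith [sub_eq_zero.mp h]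
      exact_mod_cast h3
    · exact absurd h hα0
  have hTfin : T.Finite := by
    apply Set.Finite.of_finite_image (f := fun n : ℕ => ((n:ℤ)) • α)
    · apply hfin.subset
      rintro x ⟨n, hn, rfl⟩
      exact hn.2
    · exact hginj.injOn
  have hTne : hTfin.toFinset.Nonempty := ⟨1, hTfin.mem_toFinset.mpr h1T⟩
  set m : ℕ := hTfin.toFinset.max' hTne with hm
  have hmT : m ∈ T := hTfin.mem_toFinset.mp (hTfin.toFinset.max'_mem hTne)
  have hle : ∀ n ∈ T, n ≤ m := fun n hn => hTfin.toFinset.le_max' n (hTfin.mem_toFinset.mpr hn)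
  have h1m : 1 ≤ m := hle 1 h1T
  have chain : ∀ n : ℕ, (n:ℤ) • α ∈ RS.relRoots J →
      ∀ j : ℕ, 1 ≤ j → j ≤ n → (j:ℤ) • α ∈ RS.relRoots J := by
    intro n
    induction n with
    | zero => intro _ j hj1 hj0; omega
    | succ n ih =>
      intro hmem j hj1 hjn
      rcases Nat.lt_or_ge j (n+1) with hlt | hge
      · have hn1 : 1 ≤ n := by omega
        have h' := RS.relRoots_pred J hα (by omega : 2 ≤ n+1) hmem
        rw [show (((n+1:ℕ):ℤ) - 1) = (n:ℤ) by push_cast; ring] at h'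
        exact ih h' j hj1 (by omega)
      · have hj : j = n+1 := by omega
        rw [hj]; exact hmem
  refine ⟨m, h1m, fun k => ⟨?_, ?_⟩⟩
  · intro hmem
    have hk0 : k ≠ 0 := by
      rintro rfl
      rw [zero_smul] at hmem
      exact hmem.2 rfl
    refine ⟨hk0, ?_⟩
    refine hle _ ⟨Int.natAbs_pos.mpr hk0, ?_⟩
    rcases Int.natAbs_eq k with h | h
    · rwa [← h]
    · have h2 : ((k.natAbs : ℤ)) • α = -(k • α) := by
        rw [show ((k.natAbs:ℤ)) = -k by omega, neg_smul]
      rw [h2]; exact RS.neg_mem_relRoots J hmem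
  · rintro ⟨hk0, hkm⟩
    have hj : ((k.natAbs : ℕ):ℤ) • α ∈ RS.relRoots J :=
      chain m hmT.2 k.natAbs (Int.natAbs_pos.mpr hk0) hkm
    rcases Int.natAbs_eq k with h | h
    · rwa [← h] at hj
    · have h2 : k • α = -(((k.natAbs:ℤ)) • α) := by
        conv_lhs => rw [h]
        rw [neg_smul]
      rw [h2]; exact RS.neg_mem_relRoots J hj
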